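/- (Peierls–Bogoliubov inequality) If H and A are Hermitian matrices with Tr(e^{−H}) = 1, then Tr(e^{−H+A}) ≥ exp(Tr(A e^{−H})). -/

import Mathlib

open Matrix Kronecker
open scoped ComplexOrder

noncomputable def mexp {n : Type*} [Fintype n] [DecidableEq n] (A : Matrix n n ℂ) : Matrix n n ℂ :=
  if h : A.IsHermitian then h.cfc Real.exp else 0

noncomputable def mlog {n : Type*} [Fintype n] [DecidableEq n] (A : Matrix n n ℂ) : Matrix n n ℂ :=
  if h : A.IsHermitian then h.cfc Real.log else 0

open scoped Classical in
noncomputable def msqrt {n : Type*} [Fintype n] [DecidableEq n] (A : Matrix n n ℂ) : Matrix n n ℂ :=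
  if h : A.PosSemidef then
    (h.1.eigenvectorUnitary : Matrix n n ℂ) * diagonal (((↑) : ℝ → ℂ) ∘ Real.sqrt ∘ h.1.eigenvalues) *
      (star h.1.eigenvectorUnitary : Matrix n n ℂ) else 0

noncomputable def entropy {n : Type*} [Fintype n] [DecidableEq n] (ρ : Matrix n n ℂ) : ℝ :=
  -((ρ * mlog ρ).trace.re)

noncomputable def relEnt {n : Type*} [Fintype n] [DecidableEq n] (ρ σ : Matrix n n ℂ) : ℝ :=
  ((ρ * (mlog ρ - mlog σ)).trace.re)

noncomputable def ptrace₂ {n m : Type*} [Fintype n] [Fintype m]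
    (ρ : Matrix (n × m) (n × m) ℂ) : Matrix n n ℂ :=
  Matrix.of fun i j => ∑ k, ρ (i, k) (j, k)

noncomputable def ptrace₁ {n m : Type*} [Fintype n] [Fintype m]
    (ρ : Matrix (n × m) (n × m) ℂ) : Matrix m m ℂ :=
  Matrix.of fun i j => ∑ k, ρ (k, i) (k, j)

noncomputable def traceNorm {n : Type*} [Fintype n] [DecidableEq n] (A : Matrix n n ℂ) : ℝ :=
  (((Matrix.posSemidef_conjTranspose_mul_self A).1.eigenvectorUnitary : Matrix n n ℂ) *
    diagonal (((↑) : ℝ → ℂ) ∘ Real.sqrt ∘ (Matrix.posSemidef_conjTranspose_mul_self A).1.eigenvalues) *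
    (star (Matrix.posSemidef_conjTranspose_mul_self A).1.eigenvectorUnitary : Matrix n n ℂ)).trace.re


lemma PB.exp_jensen {ι : Type*} [Fintype ι] (w x : ι → ℝ) (hw : ∀ i, 0 ≤ w i)
    (hw1 : ∑ i, w i = 1) :
    Real.exp (∑ i, w i * x i) ≤ ∑ i, w i * Real.exp (x i) := by
  have := convexOn_exp.map_sum_le (t := Finset.univ) (w := w) (p := x)
    (fun i _ => hw i) hw1 (fun i _ => Set.mem_univ _)
  simpa [smul_eq_mul] using this

lemma PB.trace_cfc {d : Type*} [Fintype d] [DecidableEq d] {M : Matrix d d ℂ}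
    (hM : M.IsHermitian) (f : ℝ → ℝ) :
    (hM.cfc f).trace = ∑ i, (f (hM.eigenvalues i) : ℂ) := by
  rw [Matrix.IsHermitian.cfc, Unitary.conjStarAlgAut_apply, Matrix.trace_mul_cycle,
    Unitary.star_mul_self_of_mem (SetLike.coe_mem _), one_mul, Matrix.trace_diagonal]
  rfl


theorem stmt2 {d : Type*} [Fintype d] [DecidableEq d] (H A : Matrix d d ℂ)
    (hH : H.IsHermitian) (hA : A.IsHermitian) (htr : (mexp (-H)).trace = 1) :
    (mexp (-H + A)).trace.re ≥ Real.exp ((A * mexp (-H)).trace.re) := by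
  have hnH : (-H).IsHermitian := hH.neg
  have hM : (-H + A).IsHermitian := hnH.add hA
  set V : Matrix d d ℂ := (hnH.eigenvectorUnitary : Matrix d d ℂ) with hV
  set U : Matrix d d ℂ := (hM.eigenvectorUnitary : Matrix d d ℂ) with hU
  set ν : d → ℝ := hnH.eigenvalues with hν
  set μ : d → ℝ := hM.eigenvalues with hμ
  set W : Matrix d d ℂ := star V * U with hW
  set q : d → d → ℝ := fun i j => Complex.normSq (W i j) with hq
  -- unitarity facts
  have hVsV : star V * V = 1 := Unitary.star_mul_self_of_mem (SetLike.coe_mem _)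
  have hVVs : V * star V = 1 := Unitary.mul_star_self_of_mem (SetLike.coe_mem _)
  have hUsU : star U * U = 1 := Unitary.star_mul_self_of_mem (SetLike.coe_mem _)
  have hUUs : U * star U = 1 := Unitary.mul_star_self_of_mem (SetLike.coe_mem _)
  have hWWs : W * star W = 1 := by
    rw [hW, StarMul.star_mul, star_star, mul_assoc, ← mul_assoc U, hUUs, one_mul, hVsV]
  have hWsW : star W * W = 1 := by
    rw [hW, StarMul.star_mul, star_star, mul_assoc, ← mul_assoc V, hVVs, one_mul, hUsU]
  -- mexp unfolding
  have hmexpnH : mexp (-H) = hnH.cfc Real.exp := dif_pos hnH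
  have hmexpM : mexp (-H + A) = hM.cfc Real.exp := dif_pos hM
  -- row and column sums of q
  have hqrow : ∀ i, ∑ j, q i j = 1 := by
    intro i
    have h1 : (W * star W) i i = 1 := by rw [hWWs]; simp
    have h2 : (∑ j, (q i j : ℂ)) = 1 := by
      rw [← h1, Matrix.mul_apply]
      refine Finset.sum_congr rfl fun j _ => ?_
      rw [Matrix.star_apply, RCLike.star_def, Complex.mul_conj]
    exact_mod_cast (by push_cast at h2 ⊢; exact_mod_cast h2 : ((∑ j, q i j : ℝ) : ℂ) = 1)
  have hqcol : ∀ j, ∑ i, q i j = 1 := by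
    intro j
    have h1 : (star W * W) j j = 1 := by rw [hWsW]; simp
    have h2 : (∑ i, (q i j : ℂ)) = 1 := by
      rw [← h1, Matrix.mul_apply]
      refine Finset.sum_congr rfl fun i _ => ?_
      rw [Matrix.star_apply, RCLike.star_def, mul_comm, Complex.mul_conj]
    exact_mod_cast (by push_cast at h2 ⊢; exact_mod_cast h2 : ((∑ i, q i j : ℝ) : ℂ) = 1)
  have hqnn : ∀ i j, 0 ≤ q i j := fun i j => Complex.normSq_nonneg _
  -- the trace condition
  have hp1 : ∑ i, Real.exp (ν i) = 1 := by
    have h2 : (∑ i, ((Real.exp (ν i) : ℝ) : ℂ)) = 1 := by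
      rw [hν, ← PB.trace_cfc hnH Real.exp, ← hmexpnH, htr]
    have h3 : (((∑ i, Real.exp (ν i) : ℝ)) : ℂ) = 1 := by rw [Complex.ofReal_sum]; exact h2
    exact_mod_cast h3
  have hpnn : ∀ i, 0 ≤ Real.exp (ν i) := fun i => (Real.exp_pos _).le
  set c : d → ℝ := fun i => ((star V * (-H + A) * V) i i).re with hc
  have hdiagνc : star V * (-H) * V = diagonal (Complex.ofReal ∘ ν) :=
    by have := hnH.conjStarAlgAut_star_eigenvectorUnitary; rw [Unitary.conjStarAlgAut_star_apply] at this; exact this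
  -- c i as a convex combination of μ
  have hconj : star V * (-H + A) * V = W * diagonal (Complex.ofReal ∘ μ) * star W := by
    conv_lhs => rw [hM.spectral_theorem, Unitary.conjStarAlgAut_apply]
    rw [hW, StarMul.star_mul, star_star]
    noncomm_ring
  have hWentry : ∀ i, ((W * diagonal (Complex.ofReal ∘ μ) * star W) i i)
      = ∑ j, ((q i j * μ j : ℝ) : ℂ) := by
    intro i
    rw [Matrix.mul_apply]
    refine Finset.sum_congr rfl fun j _ => ?_
    rw [Matrix.mul_diagonal, Matrix.star_apply, RCLike.star_def,
      mul_comm (W i j), mul_assoc, Complex.mul_conj]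
    simp only [Function.comp_apply]
    push_cast
    ring
  have hcq : ∀ i, c i = ∑ j, q i j * μ j := by
    intro i
    show ((star V * (-H + A) * V) i i).re = _
    rw [hconj, hWentry i, Complex.re_sum]
    simp
  -- diagonal entries of star V * A * V
  have hac : ∀ i, ((star V * A * V) i i).re = c i - ν i := by
    intro i
    have h2 : star V * A * V = star V * (-H + A) * V - star V * (-H) * V := by
      noncomm_ring
    rw [h2, hdiagνc]
    simp [hc, Function.comp]
  -- trace of A * mexp (-H)
  have htrA : ((A * mexp (-H)).trace).re = ∑ i, Real.exp (ν i) * (c i - ν i) := by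
    have expand : A * mexp (-H)
        = A * (V * diagonal (Complex.ofReal ∘ Real.exp ∘ ν) * star V) := by
      rw [hmexpnH]; rfl
    rw [expand, show A * (V * diagonal (Complex.ofReal ∘ Real.exp ∘ ν) * star V)
        = (A * V * diagonal (Complex.ofReal ∘ Real.exp ∘ ν)) * star V by noncomm_ring,
      Matrix.trace_mul_cycle, ← mul_assoc (star V) A V,
      Matrix.trace, Complex.re_sum]
    refine Finset.sum_congr rfl fun i _ => ?_
    rw [Matrix.diag_apply, Matrix.mul_diagonal]
    have h3 : ((star V * A * V) i i * (Complex.ofReal ∘ Real.exp ∘ ν) i).re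
        = ((star V * A * V) i i).re * Real.exp (ν i) := by
      simp [Complex.mul_re, Complex.exp_ofReal_re, Complex.exp_ofReal_im]
    rw [h3, hac i]
    ring
  -- trace of mexp M
  have htrM : ((mexp (-H + A)).trace).re = ∑ j, Real.exp (μ j) := by
    rw [hmexpM, PB.trace_cfc hM Real.exp, Complex.re_sum]
    simp [hμ, Complex.exp_ofReal_re]
  rw [htrA, htrM]
  calc Real.exp (∑ i, Real.exp (ν i) * (c i - ν i))
      ≤ ∑ i, Real.exp (ν i) * Real.exp (c i - ν i) :=
        PB.exp_jensen _ _ hpnn hp1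
    _ = ∑ i, Real.exp (c i) := by
        refine Finset.sum_congr rfl fun i _ => ?_
        rw [← Real.exp_add]; ring_nf
    _ ≤ ∑ i, ∑ j, q i j * Real.exp (μ j) := by
        refine Finset.sum_le_sum fun i _ => ?_
        rw [hcq i]
        exact PB.exp_jensen (q i) μ (hqnn i) (hqrow i)
    _ = ∑ j, Real.exp (μ j) := by
        rw [Finset.sum_comm]
        refine Finset.sum_congr rfl fun j _ => ?_
        rw [← Finset.sum_mul, hqcol j, one_mul]
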